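/- If group a is u-disadvantaged (W_{u,c_unc*}(a) < W_{u,c_unc*}(1−a)), then the optimal u-Welfare-Equalizing classifier weakly increases the welfare of group a: W_{u,c_unc*}(a) ≤ W_{u,c_WE*}(a). -/
import Mathlib


/-- Probability of group {A = a}. -/
noncomputable def grpProb {X : Type*} [Fintype X] (P : X × Bool → ℝ) (a : Bool) : ℝ :=
  ∑ x : X, P (x, a)

/-- Group-a welfare of a classifier. -/
noncomputable def welfareG {X : Type*} [Fintype X]
    (P : X × Bool → ℝ) (ubar : X × Bool → ℝ) (c : X × Bool → ℝ) (a : Bool) : ℝ :=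
  (∑ x : X, P (x, a) * ubar (x, a) * c (x, a)) / grpProb P a

/-- Bank's revenue of a classifier. -/
noncomputable def revenue {X : Type*} [Fintype X]
    (P : X × Bool → ℝ) (r : X × Bool → ℝ) (c : X × Bool → ℝ) : ℝ :=
  ∑ z : X × Bool, P z * r z * c z

/-- The optimal unconstrained (threshold) classifier: 1 iff r(x,a) > 0. -/
noncomputable def cUnc {X : Type*} (r : X × Bool → ℝ) : X × Bool → ℝ :=
  fun z => if 0 < r z then 1 else 0

/-- Auxiliary: revenue splits as a sum over the two groups. -/
lemma rev_split {X : Type*} [Fintype X]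
    (P : X × Bool → ℝ) (r : X × Bool → ℝ) (c : X × Bool → ℝ) (a : Bool) :
    revenue P r c = (∑ x : X, P (x, a) * r (x, a) * c (x, a))
      + ∑ x : X, P (x, !a) * r (x, !a) * c (x, !a) := by
  cases a <;>
    simp [revenue, Fintype.sum_prod_type, Finset.sum_add_distrib, add_comm]

/-- main theorem: if group a is u-disadvantaged under the optimal
unconstrained classifier, then the optimal u-WE classifier weakly increases the
welfare of group a. -/
theorem stmt12 {X : Type*} [Fintype X]
    (P : X × Bool → ℝ) (hP : ∀ z, 0 ≤ P z) (hPsum : ∑ z, P z = 1)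
    (h0 : 0 < grpProb P false) (h1 : 0 < grpProb P true)
    (r ubar : X × Bool → ℝ) (hu : ∀ z, 0 ≤ ubar z)
    (cWE : X × Bool → ℝ) (hcWE : ∀ z, cWE z ∈ Set.Icc (0:ℝ) 1)
    (hWE : welfareG P ubar cWE false = welfareG P ubar cWE true)
    (hopt : ∀ c : X × Bool → ℝ, (∀ z, c z ∈ Set.Icc (0:ℝ) 1) →
      welfareG P ubar c false = welfareG P ubar c true →
      revenue P r c ≤ revenue P r cWE)
    (a : Bool)
    (hdis : welfareG P ubar (cUnc r) a < welfareG P ubar (cUnc r) (!a)) :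
    welfareG P ubar (cUnc r) a ≤ welfareG P ubar cWE a := by
  by_contra hcon
  push_neg at hcon
  have hpa : 0 < grpProb P a := by cases a <;> assumption
  have hWEab : welfareG P ubar cWE a = welfareG P ubar cWE (!a) := by
    cases a
    · simpa using hWE
    · simpa using hWE.symm
  have hda : 0 < welfareG P ubar (cUnc r) a - welfareG P ubar cWE a := by linarith
  have hdb : 0 < welfareG P ubar (cUnc r) (!a) - welfareG P ubar cWE a := by linarith
  set s : ℝ := (welfareG P ubar (cUnc r) a - welfareG P ubar cWE a) /
      (welfareG P ubar (cUnc r) (!a) - welfareG P ubar cWE a) with hs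
  have hs0 : 0 < s := div_pos hda hdb
  have hs1 : s ≤ 1 := by
    rw [hs, div_le_one hdb]; linarith
  have hsmul : s * (welfareG P ubar (cUnc r) (!a) - welfareG P ubar cWE a)
      = welfareG P ubar (cUnc r) a - welfareG P ubar cWE a := by
    rw [hs, div_mul_cancel₀]
    exact ne_of_gt hdb
  set c' : X × Bool → ℝ :=
    fun z => if z.2 = a then cUnc r z else (1 - s) * cWE z + s * cUnc r z with hc'
  have hc'a : ∀ x : X, c' (x, a) = cUnc r (x, a) := fun x => if_pos rfl
  have hc'b : ∀ x : X, c' (x, !a) = (1 - s) * cWE (x, !a) + s * cUnc r (x, !a) :=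
    fun x => if_neg (by simp)
  have hUnc01 : ∀ z, cUnc r z ∈ Set.Icc (0:ℝ) 1 := by
    intro z; unfold cUnc; split <;> simp
  have hc'mem : ∀ z, c' z ∈ Set.Icc (0:ℝ) 1 := by
    intro z
    rw [hc']
    dsimp only
    split
    · exact hUnc01 z
    · obtain ⟨h1', h2'⟩ := hcWE z
      obtain ⟨h3', h4'⟩ := hUnc01 z
      exact ⟨by nlinarith, by nlinarith⟩
  -- welfare of c' on group a
  have hWA : welfareG P ubar c' a = welfareG P ubar (cUnc r) a := by
    unfold welfareG
    congr 1
    exact Finset.sum_congr rfl fun x _ => by rw [hc'a]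
  -- welfare of c' on group !a
  have hWB : welfareG P ubar c' (!a)
      = (1 - s) * welfareG P ubar cWE (!a) + s * welfareG P ubar (cUnc r) (!a) := by
    have key : ∀ x : X, P (x, !a) * ubar (x, !a) * c' (x, !a)
        = (1 - s) * (P (x, !a) * ubar (x, !a) * cWE (x, !a))
          + s * (P (x, !a) * ubar (x, !a) * cUnc r (x, !a)) := by
      intro x; rw [hc'b]; ring
    unfold welfareG
    rw [Finset.sum_congr rfl fun x _ => key x, Finset.sum_add_distrib,
      ← Finset.mul_sum, ← Finset.mul_sum, add_div, mul_div_assoc, mul_div_assoc]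
  have hc'WE : welfareG P ubar c' false = welfareG P ubar c' true := by
    have h : welfareG P ubar c' a = welfareG P ubar c' (!a) := by
      rw [hWA, hWB, ← hWEab]; nlinarith [hsmul]
    cases a
    · simpa using h
    · simpa using h.symm
  have hrev := hopt c' hc'mem hc'WE
  -- pointwise revenue optimality of cUnc
  have hpt : ∀ z, P z * r z * cWE z ≤ P z * r z * cUnc r z := by
    intro z
    unfold cUnc
    split
    · rename_i hrz
      have h2 := (hcWE z).2
      have hPr : 0 ≤ P z * r z := mul_nonneg (hP z) (le_of_lt hrz)
      nlinarith
    · rename_i hrz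
      push_neg at hrz
      have hPr : P z * r z ≤ 0 := mul_nonpos_of_nonneg_of_nonpos (hP z) hrz
      have h1' := (hcWE z).1
      nlinarith
  set AU : ℝ := ∑ x : X, P (x, a) * r (x, a) * cUnc r (x, a) with hAU
  set AW : ℝ := ∑ x : X, P (x, a) * r (x, a) * cWE (x, a) with hAW
  set BU : ℝ := ∑ x : X, P (x, !a) * r (x, !a) * cUnc r (x, !a) with hBU
  set BW : ℝ := ∑ x : X, P (x, !a) * r (x, !a) * cWE (x, !a) with hBW
  have hDA : AW ≤ AU := Finset.sum_le_sum fun x _ => hpt (x, a)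
  have hDB : BW ≤ BU := Finset.sum_le_sum fun x _ => hpt (x, !a)
  have hrevc' : revenue P r c' = AU + ((1 - s) * BW + s * BU) := by
    rw [rev_split P r c' a, hAU, hBW, hBU]
    congr 1
    · exact Finset.sum_congr rfl fun x _ => by rw [hc'a]
    · rw [Finset.mul_sum, Finset.mul_sum, ← Finset.sum_add_distrib]
      exact Finset.sum_congr rfl fun x _ => by rw [hc'b]; ring
  have hrevWE : revenue P r cWE = AW + BW := rev_split P r cWE a
  have hRAeq : AU = AW := by
    rw [hrevc', hrevWE] at hrev
    nlinarith [mul_nonneg hs0.le (sub_nonneg.mpr hDB)]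
  -- pointwise equality on group a
  have hterm : ∀ x ∈ (Finset.univ : Finset X),
      P (x, a) * r (x, a) * cUnc r (x, a) - P (x, a) * r (x, a) * cWE (x, a) = 0 := by
    have hsum : ∑ x : X, (P (x, a) * r (x, a) * cUnc r (x, a)
        - P (x, a) * r (x, a) * cWE (x, a)) = 0 := by
      rw [Finset.sum_sub_distrib, ← hAU, ← hAW, hRAeq, sub_self]
    exact (Finset.sum_eq_zero_iff_of_nonneg
      (fun x _ => sub_nonneg.mpr (hpt (x, a)))).mp hsum
  -- conclude welfare comparison on group a
  have hfinal : ∀ x ∈ (Finset.univ : Finset X), P (x, a) * ubar (x, a) * cUnc r (x, a)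
      ≤ P (x, a) * ubar (x, a) * cWE (x, a) := by
    intro x _
    have h := hterm x (Finset.mem_univ x)
    by_cases hrz : 0 < r (x, a)
    · have hcu : cUnc r (x, a) = 1 := if_pos hrz
      rw [hcu] at h ⊢
      have hz : P (x, a) * r (x, a) * (1 - cWE (x, a)) = 0 := by linarith [h]
      rcases mul_eq_zero.mp hz with h' | h'
      · rcases mul_eq_zero.mp h' with h'' | h''
        · rw [h'']; ring_nf; simp
        · exact absurd h'' (ne_of_gt hrz)
      · have h1'' : cWE (x, a) = 1 := by linarith
        rw [h1'']
    · have hcu : cUnc r (x, a) = 0 := if_neg hrz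
      rw [hcu]
      have := mul_nonneg (mul_nonneg (hP (x, a)) (hu (x, a))) (hcWE (x, a)).1
      linarith
  have hle : welfareG P ubar (cUnc r) a ≤ welfareG P ubar cWE a := by
    unfold welfareG
    exact div_le_div_of_nonneg_right (Finset.sum_le_sum hfinal) hpa.le
  linarith
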